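/- Let V ∈ C¹(𝕋) be periodic with Gibbs density ρ∞ = e^{-V}/Z, v = -V', and let φ : 𝕋 → ℝ be continuous with ∫_𝕋 φ ρ∞ dy = 0. Then the function χ(y) = B + ∫_0^y e^{V(y')} [A + ∫_0^{y'} φ(ȳ) e^{-V(ȳ)} dȳ] dy', with A = -[∫_𝕋 e^{V(y')} dy']^{-1} ∫_𝕋 ∫_0^{y'} φ(ȳ) e^{V(y')-V(ȳ)} dȳ dy' and B chosen so that ∫_𝕋 χ ρ∞ dy = 0, is a periodic C² solution of the Poisson equation v χ' + χ'' = φ with ∫_𝕋 χ ρ∞ dy = 0. -/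

import Mathlib

open Real intervalIntegral

/-- Explicit solution of the periodic Poisson problem
`v χ' + χ'' = φ`, `∫ χ ρ∞ = 0`, where `v = -V'` and `ρ∞ = e^{-V}/Z`. -/
theorem poisson_explicit_solution
    (V : ℝ → ℝ) (hV : ContDiff ℝ 1 V) (hVper : Function.Periodic V (2 * π))
    (Z : ℝ) (hZ : Z = ∫ y in (0:ℝ)..(2 * π), Real.exp (-V y))
    (ρ : ℝ → ℝ) (hρ : ∀ y, ρ y = Real.exp (-V y) / Z)
    (v : ℝ → ℝ) (hv : ∀ y, v y = -deriv V y)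
    (φ : ℝ → ℝ) (hφ : Continuous φ) (hφper : Function.Periodic φ (2 * π))
    (hφmean : ∫ y in (0:ℝ)..(2 * π), φ y * ρ y = 0)
    (A B : ℝ)
    (hA : A = -(∫ y' in (0:ℝ)..(2 * π),
        ∫ yb in (0:ℝ)..y', φ yb * Real.exp (V y' - V yb))
        / (∫ y' in (0:ℝ)..(2 * π), Real.exp (V y')))
    (χ : ℝ → ℝ)
    (hχ : ∀ y, χ y = B + ∫ y' in (0:ℝ)..y,
        Real.exp (V y') * (A + ∫ yb in (0:ℝ)..y', φ yb * Real.exp (-V yb)))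
    (hB : B = -∫ y in (0:ℝ)..(2 * π), ρ y *
        ∫ y' in (0:ℝ)..y,
          Real.exp (V y') * (A + ∫ yb in (0:ℝ)..y', φ yb * Real.exp (-V yb))) :
    Function.Periodic χ (2 * π) ∧ ContDiff ℝ 2 χ ∧
      (∀ y, v y * deriv χ y + deriv (deriv χ) y = φ y) ∧
      (∫ y in (0:ℝ)..(2 * π), χ y * ρ y) = 0 := by
  have hπ : (0:ℝ) < 2 * π := by positivity
  have hVc : Continuous V := hV.continuous
  have hV'c : Continuous (deriv V) := hV.continuous_deriv le_rfl
  have hVd : Differentiable ℝ V := hV.differentiable one_ne_zero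
  -- Z is positive
  have hZpos : 0 < Z := by
    rw [hZ]
    exact intervalIntegral_pos_of_pos
      ((Real.continuous_exp.comp hVc.neg).intervalIntegrable 0 (2*π))
      (fun x => Real.exp_pos _) hπ
  have hZne : Z ≠ 0 := ne_of_gt hZpos
  -- basic functions
  set g : ℝ → ℝ := fun y => φ y * Real.exp (-V y) with hg_def
  have hgc : Continuous g := hφ.mul (Real.continuous_exp.comp hVc.neg)
  have hgper : Function.Periodic g (2 * π) := fun x => by
    simp only [hg_def, hφper x, hVper x]
  set G : ℝ → ℝ := fun y => ∫ t in (0:ℝ)..y, g t with hG_def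
  have hGd : ∀ y, HasDerivAt G (g y) y := fun y =>
    intervalIntegral.integral_hasDerivAt_right (hgc.intervalIntegrable 0 y)
      (hgc.stronglyMeasurableAtFilter _ _) hgc.continuousAt
  have hGc : Continuous G :=
    continuous_iff_continuousAt.2 fun y => (hGd y).continuousAt
  -- total integral of g vanishes
  have hGtot : G (2 * π) = 0 := by
    have h1 : ∫ y in (0:ℝ)..(2 * π), φ y * ρ y
        = (∫ y in (0:ℝ)..(2 * π), g y) / Z := by
      rw [← intervalIntegral.integral_div]
      apply intervalIntegral.integral_congr
      intro y _
      simp [hρ y, hg_def, div_eq_mul_inv, mul_assoc]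
    have := hφmean
    rw [h1, div_eq_zero_iff] at this
    exact this.resolve_right hZne
  set F : ℝ → ℝ := fun y => Real.exp (V y) * (A + G y) with hF_def
  have hFc : Continuous F :=
    (Real.continuous_exp.comp hVc).mul (continuous_const.add hGc)
  have hFd : ∀ y, HasDerivAt F
      (deriv V y * Real.exp (V y) * (A + G y) + Real.exp (V y) * g y) y := by
    intro y
    have h1 : HasDerivAt (fun x => Real.exp (V x)) (Real.exp (V y) * deriv V y) y :=
      (hVd y).hasDerivAt.exp
    have h2 : HasDerivAt (fun x => A + G x) (g y) y := (hGd y).const_add A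
    have := h1.mul h2
    exact this.congr_deriv (by ring)
  -- F is periodic
  have hGper : ∀ x, G (x + 2 * π) = G x := by
    intro x
    have hsplit : G (x + 2 * π) = G (2 * π) + ∫ t in (2*π)..(x + 2*π), g t := by
      rw [hG_def]
      exact (intervalIntegral.integral_add_adjacent_intervals
        (hgc.intervalIntegrable _ _) (hgc.intervalIntegrable _ _)).symm
    have hshift : (∫ t in (2*π)..(x + 2*π), g t) = ∫ t in (0:ℝ)..x, g t := by
      have h0 := intervalIntegral.integral_comp_add_right (a := (0:ℝ)) (b := x) g (2*π)
      rw [zero_add] at h0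
      rw [← h0]
      exact intervalIntegral.integral_congr fun t _ => hgper t
    rw [hsplit, hshift, hGtot, zero_add]
  have hFper : Function.Periodic F (2 * π) := fun x => by
    simp only [hF_def, hVper x, hGper x]
  -- integral of F over a period vanishes
  have hIpos : 0 < ∫ y' in (0:ℝ)..(2 * π), Real.exp (V y') :=
    intervalIntegral_pos_of_pos
      ((Real.continuous_exp.comp hVc).intervalIntegrable 0 (2*π))
      (fun x => Real.exp_pos _) hπ
  have hFtot : (∫ y in (0:ℝ)..(2 * π), F y) = 0 := by
    have hi1 : IntervalIntegrable (fun y => A * Real.exp (V y))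
        MeasureTheory.volume 0 (2*π) :=
      ((show Continuous fun y => A * Real.exp (V y) from
        continuous_const.mul (Real.continuous_exp.comp hVc)).intervalIntegrable _ _)
    have hi2 : IntervalIntegrable (fun y => Real.exp (V y) * G y)
        MeasureTheory.volume 0 (2*π) :=
      ((show Continuous fun y => Real.exp (V y) * G y from
        (Real.continuous_exp.comp hVc).mul hGc).intervalIntegrable _ _)
    have hadd := intervalIntegral.integral_add hi1 hi2
    have hsplit : (∫ y in (0:ℝ)..(2 * π), F y)
        = A * (∫ y' in (0:ℝ)..(2 * π), Real.exp (V y'))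
          + ∫ y' in (0:ℝ)..(2 * π), Real.exp (V y') * G y' := by
      rw [← intervalIntegral.integral_const_mul, ← hadd]
      exact intervalIntegral.integral_congr fun y _ => by
        show Real.exp (V y) * (A + G y) = _; ring
    have hinner : (∫ y' in (0:ℝ)..(2 * π), Real.exp (V y') * G y')
        = ∫ y' in (0:ℝ)..(2 * π), ∫ yb in (0:ℝ)..y', φ yb * Real.exp (V y' - V yb) := by
      apply intervalIntegral.integral_congr
      intro y' _
      rw [hG_def]
      simp only
      rw [← intervalIntegral.integral_const_mul]
      apply intervalIntegral.integral_congr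
      intro yb _
      show Real.exp (V y') * g yb = φ yb * Real.exp (V y' - V yb)
      simp only [hg_def, Real.exp_sub, Real.exp_neg]
      ring
    rw [hsplit, hinner, hA]
    field_simp
    ring
  -- χ derivative
  have hχd : ∀ y, HasDerivAt χ (F y) y := by
    intro y
    have : HasDerivAt (fun x => B + ∫ y' in (0:ℝ)..x, F y') (F y) y :=
      (intervalIntegral.integral_hasDerivAt_right (hFc.intervalIntegrable 0 y)
        (hFc.stronglyMeasurableAtFilter _ _) hFc.continuousAt).const_add B
    exact this.congr_of_eventuallyEq (Filter.Eventually.of_forall fun x => by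
      rw [hχ x])
  have hχdiff : Differentiable ℝ χ := fun y => (hχd y).differentiableAt
  have hderivχ : deriv χ = F := funext fun y => (hχd y).deriv
  -- periodicity of χ
  have hχper : Function.Periodic χ (2 * π) := by
    intro x
    rw [hχ (x + 2*π), hχ x]
    congr 1
    have hsplit : (∫ y' in (0:ℝ)..(x + 2*π), F y')
        = (∫ y' in (0:ℝ)..x, F y') + ∫ y' in x..(x + 2*π), F y' :=
      (intervalIntegral.integral_add_adjacent_intervals
        (hFc.intervalIntegrable _ _) (hFc.intervalIntegrable _ _)).symm
    have hper : (∫ y' in x..(x + 2*π), F y') = ∫ y' in (0:ℝ)..(0 + 2*π), F y' :=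
      hFper.intervalIntegral_add_eq x 0
    calc (∫ y' in (0:ℝ)..(x + 2*π), Real.exp (V y') * (A + ∫ yb in (0:ℝ)..y', φ yb * Real.exp (-V yb)))
        = ∫ y' in (0:ℝ)..(x + 2*π), F y' := rfl
      _ = (∫ y' in (0:ℝ)..x, F y') + ∫ y' in x..(x + 2*π), F y' := hsplit
      _ = (∫ y' in (0:ℝ)..x, F y') := by
          rw [hper, zero_add, hFtot, add_zero]
      _ = _ := rfl
  -- C² smoothness
  have hF'c : Continuous (deriv F) := by
    have : deriv F = fun y => deriv V y * Real.exp (V y) * (A + G y)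
        + Real.exp (V y) * g y := funext fun y => (hFd y).deriv
    rw [this]
    exact ((hV'c.mul (Real.continuous_exp.comp hVc)).mul
      (continuous_const.add hGc)).add ((Real.continuous_exp.comp hVc).mul hgc)
  have hχC2 : ContDiff ℝ 2 χ := by
    rw [show (2 : WithTop ℕ∞) = 1 + 1 from by norm_num, contDiff_succ_iff_deriv]
    refine ⟨hχdiff, by simp, ?_⟩
    rw [hderivχ]
    exact contDiff_one_iff_deriv.2 ⟨fun y => (hFd y).differentiableAt, hF'c⟩
  -- Poisson equation
  have hpoisson : ∀ y, v y * deriv χ y + deriv (deriv χ) y = φ y := by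
    intro y
    rw [hderivχ, hv y, (hFd y).deriv]
    have hcancel : Real.exp (V y) * g y = φ y := by
      rw [hg_def]
      simp only
      rw [Real.exp_neg]
      field_simp
    rw [hF_def]
    simp only
    rw [hcancel]
    ring
  -- mean zero
  have hρc : Continuous ρ := by
    have : ρ = fun y => Real.exp (-V y) / Z := funext hρ
    rw [this]
    exact (Real.continuous_exp.comp hVc.neg).div_const Z
  have hρtot : (∫ y in (0:ℝ)..(2 * π), ρ y) = 1 := by
    have : (∫ y in (0:ℝ)..(2 * π), ρ y) = (∫ y in (0:ℝ)..(2 * π), Real.exp (-V y)) / Z := by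
      rw [← intervalIntegral.integral_div]
      exact intervalIntegral.integral_congr fun y _ => hρ y
    rw [this, ← hZ, div_self hZne]
  set H : ℝ → ℝ := fun y => ∫ y' in (0:ℝ)..y, F y' with hH_def
  have hHc : Continuous H := continuous_iff_continuousAt.2 fun y =>
    (intervalIntegral.integral_hasDerivAt_right (hFc.intervalIntegrable 0 y)
      (hFc.stronglyMeasurableAtFilter _ _) hFc.continuousAt).continuousAt
  have hmean : (∫ y in (0:ℝ)..(2 * π), χ y * ρ y) = 0 := by
    have h1 : (∫ y in (0:ℝ)..(2 * π), χ y * ρ y)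
        = B * (∫ y in (0:ℝ)..(2 * π), ρ y) + ∫ y in (0:ℝ)..(2 * π), H y * ρ y := by
      rw [← intervalIntegral.integral_const_mul, ← intervalIntegral.integral_add
        ((show Continuous fun y => B * ρ y from continuous_const.mul hρc).intervalIntegrable _ _)
        ((show Continuous fun y => H y * ρ y from hHc.mul hρc).intervalIntegrable _ _)]
      apply intervalIntegral.integral_congr
      intro y _
      show χ y * ρ y = B * ρ y + H y * ρ y
      rw [hχ y]
      show (B + H y) * ρ y = B * ρ y + H y * ρ y
      ring
    have h2 : B = -∫ y in (0:ℝ)..(2 * π), ρ y * H y := hB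
    rw [h1, hρtot, mul_one, h2]
    rw [show (∫ y in (0:ℝ)..(2 * π), H y * ρ y)
      = ∫ y in (0:ℝ)..(2 * π), ρ y * H y from
      intervalIntegral.integral_congr fun y _ => mul_comm _ _]
    ring
  exact ⟨hχper, hχC2, hpoisson, hmean⟩
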